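/- With the multiplier J(g,z)_{p,ℓ} = binom(p,ℓ)·(−c)^{p−ℓ}·g'(z)^{λ−m/2+(p+ℓ)/2} for p ≥ ℓ (and 0 for p < ℓ), where c = c_g satisfies g'' = −2c(g')^{3/2}, one has Γⱼ(D⁺_{λⱼ}(g^{-1})f) = J(g,·)·((Γⱼf)∘g) for every j with 0 ≤ j ≤ m and every f in A^{(λⱼ)}(𝔻). That is, the same matrix multiplier J intertwines the discrete series action with the Γⱼ-transferred action for every j. -/

import Mathlib

open Metric Finset

/-- With the multiplier
`J(g,z)_{p,ℓ} = C(p,ℓ)·(-c)^{p-ℓ}·g'(z)^{λ-m/2+(p+ℓ)/2}` (for `p ≥ ℓ`, `0` otherwise),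
where `g'' = -2c·(g')^{3/2}` and powers of `g'` are taken via a fixed holomorphic branch
`L` of `log g'`, one has `Γⱼ(D⁺_{λⱼ}(g⁻¹)f) = J(g,·)·((Γⱼ f) ∘ g)` for every `0 ≤ j ≤ m`
and every holomorphic `f` on the disc; here `D⁺_{λⱼ}(g⁻¹)f = (g')^{λⱼ}·(f∘g)` with
`λⱼ = λ - m/2 + j`, and `Γⱼ` has components `C(ℓ,j)·(2λⱼ)_{ℓ-j}⁻¹·f^{(ℓ-j)}`. -/
private lemma iDW_open {f : ℂ → ℂ} {s : Set ℂ} {x : ℂ} (n : ℕ)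
    (hs : IsOpen s) (hx : x ∈ s) : iteratedDerivWithin n f s x = iteratedDeriv n f x := by
  rw [iteratedDerivWithin_eq_iteratedFDerivWithin, iteratedDeriv_eq_iteratedFDeriv,
    iteratedFDerivWithin_of_isOpen n hs hx]

private lemma asc_eval_prod (n : ℕ) (x : ℂ) :
    (ascPochhammer ℂ n).eval x = ∏ i ∈ range n, (x + i) := by
  induction n with
  | zero => simp
  | succ n ih => rw [ascPochhammer_succ_eval, prod_range_succ, ih]

private lemma factor_ne {x : ℂ} (hx : 0 < x.re) (i : ℕ) : x + (i : ℂ) ≠ 0 := by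
  intro h
  have h2 : (x + (i : ℂ)).re = 0 := by rw [h]; simp
  rw [Complex.add_re, Complex.natCast_re] at h2
  have : (0:ℝ) ≤ (i:ℝ) := Nat.cast_nonneg i
  linarith

private lemma abel_sum (n : ℕ) (a b d u : ℕ → ℂ)
    (h0 : a 0 = d 0) (hn : b n = d (n+1))
    (h : ∀ k, k < n → a (k+1) + b k = d (k+1)) :
    ∑ k ∈ range (n+1), (a k * u k + b k * u (k+1)) = ∑ k ∈ range (n+2), d k * u k := by
  rw [Finset.sum_add_distrib, Finset.sum_range_succ' (fun k => a k * u k) n,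
    Finset.sum_range_succ (fun k => b k * u (k+1)) n,
    Finset.sum_range_succ (fun k => d k * u k) (n+1),
    Finset.sum_range_succ' (fun k => d k * u k) n]
  have key : ∑ i ∈ range n, a (i+1) * u (i+1) + ∑ i ∈ range n, b i * u (i+1)
      = ∑ i ∈ range n, d (i+1) * u (i+1) := by
    rw [← Finset.sum_add_distrib]
    exact Finset.sum_congr rfl fun i hi => by
      rw [← h i (Finset.mem_range.mp hi)]; ring
  linear_combination key + u 0 * h0 + u (n+1) * hn

private lemma coeff_id {n k : ℕ} (hk : k < n) (ν c : ℂ) :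
    (n.choose (k+1) : ℂ) * (∏ i ∈ Finset.Ico (k+1) n, (2*ν + i)) * (-c)^(n-(k+1)) * (-c)
        * (2*ν + n + (k+1))
      + (n.choose k : ℂ) * (∏ i ∈ Finset.Ico k n, (2*ν + i)) * (-c)^(n-k)
    = ((n+1).choose (k+1) : ℂ) * (∏ i ∈ Finset.Ico (k+1) (n+1), (2*ν + i)) * (-c)^(n+1-(k+1)) := by
  have e1 : n - k = (n - (k+1)) + 1 := by omega
  have e2 : n + 1 - (k + 1) = (n - (k+1)) + 1 := by omega
  rw [e1, e2, pow_succ, Finset.prod_eq_prod_Ico_succ_bot hk, Finset.prod_Ico_succ_top (by omega : k+1 ≤ n)]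
  have hpas : (((n+1).choose (k+1) : ℕ) : ℂ) = (n.choose k : ℂ) + (n.choose (k+1) : ℂ) := by
    exact_mod_cast Nat.choose_succ_succ n k
  have h3 : (n.choose (k+1) : ℂ) * ((k:ℂ)+1) = (n.choose k : ℂ) * ((n:ℂ) - (k:ℂ)) := by
    have := Nat.choose_succ_right_eq n k
    have h4 : ((n.choose (k+1) * (k+1) : ℕ) : ℂ) = ((n.choose k * (n-k) : ℕ) : ℂ) := by
      exact_mod_cast this
    push_cast [Nat.cast_sub hk.le] at h4
    exact h4
  push_cast
  linear_combination ((∏ i ∈ Finset.Ico (k+1) n, (2*ν + i)) * (-c)^(n-(k+1)) * (-c)) *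
    (h3 - (2*ν + (n:ℂ)) * hpas)


open Topology in
private lemma key_formula (g f L : ℂ → ℂ) (c ν : ℂ)
    (hg : DifferentiableOn ℂ g (ball (0:ℂ) 1))
    (hgmap : Set.MapsTo g (ball (0:ℂ) 1) (ball (0:ℂ) 1))
    (hf : DifferentiableOn ℂ f (ball (0:ℂ) 1))
    (hL : DifferentiableOn ℂ L (ball (0:ℂ) 1))
    (hbranch : ∀ z ∈ ball (0:ℂ) 1, Complex.exp (L z) = deriv g z)
    (hLd : ∀ z ∈ ball (0:ℂ) 1, deriv L z = -2 * c * Complex.exp ((1/2 : ℂ) * L z))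
    (n : ℕ) : ∀ z ∈ ball (0:ℂ) 1,
    iteratedDeriv n (fun w => Complex.exp (ν * L w) * f (g w)) z
      = ∑ k ∈ range (n+1), (n.choose k : ℂ)
          * (∏ i ∈ Finset.Ico k n, (2*ν + (i:ℂ))) * (-c)^(n-k)
          * Complex.exp ((ν + ((n:ℂ)+(k:ℂ))/2) * L z) * iteratedDeriv k f (g z) := by
  have hfa : AnalyticOnNhd ℂ f (ball (0:ℂ) 1) := hf.analyticOnNhd isOpen_ball
  have hfk : ∀ k, AnalyticOnNhd ℂ (iteratedDeriv k f) (ball (0:ℂ) 1) := by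
    intro k
    induction k with
    | zero => simpa [iteratedDeriv_zero] using hfa
    | succ k ih => rw [iteratedDeriv_succ]; exact ih.deriv
  induction n with
  | zero =>
    intro z hz
    simp [iteratedDeriv_zero]
  | succ n ih =>
    intro z hz
    have hmem : ball (0:ℂ) 1 ∈ 𝓝 z := isOpen_ball.mem_nhds hz
    rw [iteratedDeriv_succ]
    have hee : iteratedDeriv n (fun w => Complex.exp (ν * L w) * f (g w))
        =ᶠ[𝓝 z] fun w => ∑ k ∈ range (n+1), (n.choose k : ℂ)
          * (∏ i ∈ Finset.Ico k n, (2*ν + (i:ℂ))) * (-c)^(n-k)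
          * Complex.exp ((ν + ((n:ℂ)+(k:ℂ))/2) * L w) * iteratedDeriv k f (g w) := by
      filter_upwards [hmem] with w hw
      exact ih w hw
    rw [hee.deriv_eq]
    have hLz : HasDerivAt L (deriv L z) z :=
      ((hL z hz).differentiableAt hmem).hasDerivAt
    have hgz : HasDerivAt g (Complex.exp (L z)) z := by
      have := ((hg z hz).differentiableAt hmem).hasDerivAt
      rwa [← hbranch z hz] at this
    have hgzmem : g z ∈ ball (0:ℂ) 1 := hgmap hz
    have hterm : ∀ k ∈ range (n+1),
        HasDerivAt (fun w => (n.choose k : ℂ)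
          * (∏ i ∈ Finset.Ico k n, (2*ν + (i:ℂ))) * (-c)^(n-k)
          * Complex.exp ((ν + ((n:ℂ)+(k:ℂ))/2) * L w) * iteratedDeriv k f (g w))
        ((n.choose k : ℂ) * (∏ i ∈ Finset.Ico k n, (2*ν + (i:ℂ))) * (-c)^(n-k)
            * (Complex.exp ((ν + ((n:ℂ)+(k:ℂ))/2) * L z) * ((ν + ((n:ℂ)+(k:ℂ))/2) * deriv L z))
            * iteratedDeriv k f (g z)
          + (n.choose k : ℂ) * (∏ i ∈ Finset.Ico k n, (2*ν + (i:ℂ))) * (-c)^(n-k)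
            * Complex.exp ((ν + ((n:ℂ)+(k:ℂ))/2) * L z)
            * (iteratedDeriv (k+1) f (g z) * Complex.exp (L z))) z := by
      intro k _
      have hk1 : HasDerivAt (fun w => Complex.exp ((ν + ((n:ℂ)+(k:ℂ))/2) * L w))
          (Complex.exp ((ν + ((n:ℂ)+(k:ℂ))/2) * L z) * ((ν + ((n:ℂ)+(k:ℂ))/2) * deriv L z)) z :=
        (hLz.const_mul _).cexp
      have hdk : HasDerivAt (iteratedDeriv k f) (iteratedDeriv (k+1) f (g z)) (g z) := by
        rw [iteratedDeriv_succ]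
        exact ((hfk k (g z) hgzmem).differentiableAt).hasDerivAt
      have hk2 : HasDerivAt (fun w => iteratedDeriv k f (g w))
          (iteratedDeriv (k+1) f (g z) * Complex.exp (L z)) z := hdk.comp z hgz
      exact (hk1.const_mul _).mul hk2
    have hsum := HasDerivAt.fun_sum hterm
    rw [hsum.deriv, hLd z hz]
    -- now pure algebra
    have step1 : (∑ k ∈ range (n+1),
        ((n.choose k : ℂ) * (∏ i ∈ Finset.Ico k n, (2*ν + (i:ℂ))) * (-c)^(n-k)
            * (Complex.exp ((ν + ((n:ℂ)+(k:ℂ))/2) * L z)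
              * ((ν + ((n:ℂ)+(k:ℂ))/2) * (-2 * c * Complex.exp ((1/2 : ℂ) * L z))))
            * iteratedDeriv k f (g z)
          + (n.choose k : ℂ) * (∏ i ∈ Finset.Ico k n, (2*ν + (i:ℂ))) * (-c)^(n-k)
            * Complex.exp ((ν + ((n:ℂ)+(k:ℂ))/2) * L z)
            * (iteratedDeriv (k+1) f (g z) * Complex.exp (L z))))
        = ∑ k ∈ range (n+1),
          (((n.choose k : ℂ) * (∏ i ∈ Finset.Ico k n, (2*ν + (i:ℂ))) * (-c)^(n-k) * (-c)
              * (2*ν + (n:ℂ) + (k:ℂ)))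
            * (Complex.exp ((ν + ((n:ℂ)+1+(k:ℂ))/2) * L z) * iteratedDeriv k f (g z))
          + ((n.choose k : ℂ) * (∏ i ∈ Finset.Ico k n, (2*ν + (i:ℂ))) * (-c)^(n-k))
            * (Complex.exp ((ν + ((n:ℂ)+1+((k+1:ℕ):ℂ))/2) * L z)
              * iteratedDeriv (k+1) f (g z))) := by
      refine Finset.sum_congr rfl fun k _ => ?_
      have e1 : Complex.exp ((ν + ((n:ℂ)+1+(k:ℂ))/2) * L z)
          = Complex.exp ((ν + ((n:ℂ)+(k:ℂ))/2) * L z) * Complex.exp ((1/2:ℂ) * L z) := by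
        rw [← Complex.exp_add]; congr 1; ring
      have e2 : Complex.exp ((ν + ((n:ℂ)+1+((k+1:ℕ):ℂ))/2) * L z)
          = Complex.exp ((ν + ((n:ℂ)+(k:ℂ))/2) * L z) * Complex.exp (L z) := by
        rw [← Complex.exp_add]; push_cast; congr 1; ring
      rw [e1, e2]; ring
    rw [step1, abel_sum n _ _ (fun k => ((n+1).choose k : ℂ)
        * (∏ i ∈ Finset.Ico k (n+1), (2*ν + (i:ℂ))) * (-c)^(n+1-k))
        (fun k => Complex.exp ((ν + ((n:ℂ)+1+(k:ℂ))/2) * L z) * iteratedDeriv k f (g z))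
        ?_ ?_ ?_]
    · refine Finset.sum_congr rfl fun k _ => ?_
      push_cast
      ring
    · simp only [Nat.choose_zero_right, Nat.cast_one, Nat.sub_zero,
        Finset.prod_Ico_succ_top (Nat.zero_le n), pow_succ]
      push_cast
      ring
    · simp [Nat.choose_self, Nat.sub_self]
    · intro k hk
      have := coeff_id hk ν c
      push_cast at this ⊢
      exact this

theorem gamma_intertwines_discrete_series
    (m : ℕ) (hm : 0 < m) (lam : ℝ) (hlam : (m : ℝ) < 2 * lam)
    (g f L : ℂ → ℂ) (c : ℂ)
    (hg : DifferentiableOn ℂ g (ball (0:ℂ) 1))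
    (hgmap : Set.MapsTo g (ball (0:ℂ) 1) (ball (0:ℂ) 1))
    (hf : DifferentiableOn ℂ f (ball (0:ℂ) 1))
    (hL : DifferentiableOn ℂ L (ball (0:ℂ) 1))
    (hbranch : ∀ z ∈ ball (0:ℂ) 1, Complex.exp (L z) = derivWithin g (ball (0:ℂ) 1) z)
    (hsecond : ∀ z ∈ ball (0:ℂ) 1,
      derivWithin (derivWithin g (ball (0:ℂ) 1)) (ball (0:ℂ) 1) z
        = -2 * c * Complex.exp ((3/2 : ℂ) * L z))
    (j : Fin (m + 1)) :
    ∀ z ∈ ball (0:ℂ) 1, ∀ p : Fin (m + 1),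
      -- `p`-th component of `Γⱼ (D⁺_{λⱼ}(g⁻¹) f)` at `z`
      (if (j : ℕ) ≤ (p : ℕ) then
          ((p : ℕ).choose (j : ℕ) : ℂ)
            * ((ascPochhammer ℂ ((p : ℕ) - (j : ℕ))).eval
                (2 * (lam : ℂ) - (m : ℕ) + 2 * ((j : ℕ) : ℂ)))⁻¹
            * iteratedDerivWithin ((p : ℕ) - (j : ℕ))
                (fun w => Complex.exp (((lam : ℂ) - m / 2 + (j : ℕ)) * L w) * f (g w))
                (ball (0:ℂ) 1) z
        else 0)
      = ∑ ℓ : Fin (m + 1),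
          -- `J(g,z)_{p,ℓ}`
          (if (ℓ : ℕ) ≤ (p : ℕ) then
              ((p : ℕ).choose (ℓ : ℕ) : ℂ) * (-c) ^ ((p : ℕ) - (ℓ : ℕ))
                * Complex.exp
                    (((lam : ℂ) - m / 2 + ((p : ℕ) + (ℓ : ℕ) : ℂ) / 2) * L z)
            else 0)
          -- times the `ℓ`-th component of `Γⱼ f` at `g z`
          * (if (j : ℕ) ≤ (ℓ : ℕ) then
              ((ℓ : ℕ).choose (j : ℕ) : ℂ)
                * ((ascPochhammer ℂ ((ℓ : ℕ) - (j : ℕ))).eval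
                    (2 * (lam : ℂ) - (m : ℕ) + 2 * ((j : ℕ) : ℂ)))⁻¹
                * iteratedDerivWithin ((ℓ : ℕ) - (j : ℕ)) f (ball (0:ℂ) 1) (g z)
            else 0) := by
  intro z hz p
  have hgz : g z ∈ ball (0:ℂ) 1 := hgmap hz
  have hb' : ∀ w ∈ ball (0:ℂ) 1, Complex.exp (L w) = deriv g w := fun w hw =>
    (hbranch w hw).trans (derivWithin_of_isOpen isOpen_ball hw)
  have hLd : ∀ w ∈ ball (0:ℂ) 1, deriv L w = -2 * c * Complex.exp ((1/2:ℂ) * L w) := by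
    intro w hw
    have h1 : deriv (derivWithin g (ball (0:ℂ) 1)) w = deriv (fun u => Complex.exp (L u)) w := by
      apply Filter.EventuallyEq.deriv_eq
      filter_upwards [isOpen_ball.mem_nhds hw] with u hu
      exact (hbranch u hu).symm
    have h2 : HasDerivAt (fun u => Complex.exp (L u)) (Complex.exp (L w) * deriv L w) w :=
      (((hL w hw).differentiableAt (isOpen_ball.mem_nhds hw)).hasDerivAt).cexp
    have h3 : Complex.exp (L w) * deriv L w = -2 * c * Complex.exp ((3/2:ℂ) * L w) := by
      rw [← h2.deriv, ← h1, ← derivWithin_of_isOpen isOpen_ball hw]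
      exact hsecond w hw
    have h4 : Complex.exp (L w) * deriv L w
        = Complex.exp (L w) * (-2 * c * Complex.exp ((1/2:ℂ) * L w)) := by
      rw [h3, show (3/2:ℂ) * L w = L w + (1/2:ℂ) * L w from by ring, Complex.exp_add]; ring
    exact mul_left_cancel₀ (Complex.exp_ne_zero _) h4
  set x : ℂ := 2 * (lam:ℂ) - (m:ℕ) + 2 * ((j:ℕ):ℂ) with hxdef
  set ν : ℂ := (lam:ℂ) - m/2 + (j:ℕ) with hνdef
  have hxν : x = 2 * ν := by rw [hxdef, hνdef]; ring
  have hre : ∀ i : ℕ, x + (i:ℂ) ≠ 0 := by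
    intro i
    apply factor_ne
    rw [hxdef]
    simp only [Complex.add_re, Complex.sub_re, Complex.mul_re, Complex.ofReal_re,
      Complex.ofReal_im, Complex.natCast_re, Complex.natCast_im]
    norm_num
    linarith [Nat.cast_nonneg (α := ℝ) (j:ℕ)]
  have hPne : ∀ r : ℕ, (ascPochhammer ℂ r).eval x ≠ 0 := by
    intro r; rw [asc_eval_prod]; exact Finset.prod_ne_zero_iff.mpr fun i _ => hre i
  by_cases hjp : (j:ℕ) ≤ (p:ℕ)
  · rw [if_pos hjp, iDW_open _ isOpen_ball hz,
      key_formula g f L c ν hg hgmap hf hL hb' hLd ((p:ℕ)-(j:ℕ)) z hz]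
    set n := (p:ℕ) - (j:ℕ) with hn
    rw [Fin.sum_univ_eq_sum_range (fun i =>
      (if i ≤ (p:ℕ) then ((p:ℕ).choose i : ℂ) * (-c)^((p:ℕ)-i)
          * Complex.exp (((lam:ℂ) - m/2 + (((p:ℕ):ℂ) + (i:ℂ))/2) * L z) else 0)
      * (if (j:ℕ) ≤ i then ((i.choose (j:ℕ)) : ℂ)
          * ((ascPochhammer ℂ (i-(j:ℕ))).eval x)⁻¹
          * iteratedDerivWithin (i-(j:ℕ)) f (ball (0:ℂ) 1) (g z) else 0)) (m+1)]
    have hsubset : Finset.Ico (j:ℕ) ((p:ℕ)+1) ⊆ range (m+1) := by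
      intro i hi
      rw [Finset.mem_Ico] at hi
      rw [Finset.mem_range]
      have := p.isLt
      omega
    rw [← Finset.sum_subset hsubset (by
      intro i _ hi
      rw [Finset.mem_Ico] at hi
      push_neg at hi
      by_cases h1 : (j:ℕ) ≤ i
      · have h2 : ¬ i ≤ (p:ℕ) := by have := hi h1; omega
        rw [if_neg h2, zero_mul]
      · rw [if_neg h1, mul_zero])]
    rw [Finset.sum_Ico_eq_sum_range, show (p:ℕ)+1-(j:ℕ) = n+1 from by omega, Finset.mul_sum]
    refine Finset.sum_congr rfl fun k hk => ?_
    rw [Finset.mem_range] at hk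
    have hk' : k ≤ n := by omega
    have h1 : (j:ℕ) ≤ (j:ℕ)+k := Nat.le_add_right _ _
    have h2 : (j:ℕ)+k ≤ (p:ℕ) := by omega
    rw [if_pos h2, if_pos h1, Nat.add_sub_cancel_left, iDW_open _ isOpen_ball hgz,
      show (p:ℕ) - ((j:ℕ)+k) = n - k from by omega]
    have hexp : Complex.exp (((lam:ℂ) - m/2 + (((p:ℕ):ℂ) + (((j:ℕ)+k : ℕ):ℂ))/2) * L z)
        = Complex.exp ((ν + ((n:ℂ)+(k:ℂ))/2) * L z) := by
      congr 1
      rw [hνdef, hn, Nat.cast_sub hjp]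
      push_cast
      ring
    rw [hexp]
    have hprod : (∏ i ∈ Finset.Ico k n, (2*ν + (i:ℂ))) = ∏ i ∈ Finset.Ico k n, (x + (i:ℂ)) := by
      refine Finset.prod_congr rfl fun i _ => ?_
      rw [hxν]
    have hPsplit : (ascPochhammer ℂ n).eval x
        = (ascPochhammer ℂ k).eval x * ∏ i ∈ Finset.Ico k n, (x + (i:ℂ)) := by
      rw [asc_eval_prod, asc_eval_prod, Finset.prod_range_mul_prod_Ico _ hk']
    have hch : ((p:ℕ).choose ((j:ℕ)+k) : ℂ) * ((((j:ℕ)+k).choose (j:ℕ)) : ℂ)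
        = ((p:ℕ).choose (j:ℕ) : ℂ) * ((n.choose k) : ℂ) := by
      have h3 := Nat.choose_mul (n := (p:ℕ)) h1
      rw [Nat.add_sub_cancel_left, ← hn] at h3
      exact_mod_cast h3
    have hQne : (∏ i ∈ Finset.Ico k n, (x + (i:ℂ))) ≠ 0 :=
      Finset.prod_ne_zero_iff.mpr fun i _ => hre i
    rw [hprod, hPsplit, mul_inv]
    have hc : (∏ i ∈ Finset.Ico k n, (x + (i:ℂ)))⁻¹ * (∏ i ∈ Finset.Ico k n, (x + (i:ℂ))) = 1 :=
      inv_mul_cancel₀ hQne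
    linear_combination (((p:ℕ).choose (j:ℕ) : ℂ) * (n.choose k : ℂ) * (-c)^(n-k)
        * Complex.exp ((ν + ((n:ℂ)+(k:ℂ))/2) * L z) * iteratedDeriv k f (g z)
        * ((ascPochhammer ℂ k).eval x)⁻¹) * hc
      - ((-c)^(n-k) * Complex.exp ((ν + ((n:ℂ)+(k:ℂ))/2) * L z) * iteratedDeriv k f (g z)
        * ((ascPochhammer ℂ k).eval x)⁻¹) * hch
  · rw [if_neg hjp]
    symm
    apply Finset.sum_eq_zero
    intro ℓ _
    by_cases h1 : (ℓ:ℕ) ≤ (p:ℕ)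
    · have h2 : ¬ (j:ℕ) ≤ (ℓ:ℕ) := fun h2 => hjp (h2.trans h1)
      rw [if_neg h2, mul_zero]
    · rw [if_neg h1, zero_mul]
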